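/- Let G be a normed Abelian group with nonbranching optimal transport plans. If g, h ∈ G are indecomposable elements generating distinct cyclic subgroups ⟨g⟩ ≠ ⟨h⟩, then |kg + lh| = |kg| + |lh| for all integers k, l. -/

import Mathlib

def IsGroupNorm {G : Type*} [AddCommGroup G] (ν : G → ℝ) : Prop :=
  (∀ g, 0 ≤ ν g) ∧ (∀ g h, ν (g + h) ≤ ν g + ν h) ∧
  (∀ g, ν (-g) = ν g) ∧ (∀ g, ν g = 0 ↔ g = 0)

def HasNBP {G : Type*} [AddCommGroup G] (ν : G → ℝ) : Prop :=
  ∀ (n : ℕ) (g : Fin n → G), (∑ i, g i) = 0 →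
    ∃ f : Fin n → Fin n → G,
      (∀ i j, f i j = - f j i) ∧ (∀ i, f i i = 0) ∧
      (∀ i, g i = ∑ j, f i j) ∧ (∀ i, ν (g i) = ∑ j, ν (f i j))

def HasCZT {G : Type*} [AddCommGroup G] (ν : G → ℝ) : Prop :=
  ∀ a b c : G, a + b + c = 0 →
    ν a + ν b = ν c ∨ ν a + ν c = ν b ∨ ν b + ν c = ν a

def IsIndecomposable {G : Type*} [AddCommGroup G] (ν : G → ℝ) (g : G) : Prop :=
  ∀ h : G, ν h + ν (g - h) = ν g → h = 0 ∨ h = g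

namespace Stmt5Aux

variable {G : Type*} [AddCommGroup G] {ν : G → ℝ}

lemma norm_zero (hν : IsGroupNorm ν) : ν 0 = 0 := (hν.2.2.2 0).2 rfl

lemma norm_neg (hν : IsGroupNorm ν) (x : G) : ν (-x) = ν x := hν.2.2.1 x

lemma norm_sum_le (hν : IsGroupNorm ν) {ι : Type*} (s : Finset ι) (F : ι → G) :
    ν (∑ i ∈ s, F i) ≤ ∑ i ∈ s, ν (F i) := by
  classical
  induction s using Finset.induction_on with
  | empty => simp [norm_zero hν]
  | insert _ _ hx ih =>
      rename_i a s
      rw [Finset.sum_insert hx, Finset.sum_insert hx]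
      exact (hν.2.1 _ _).trans (by linarith)

lemma norm_nsmul_le (hν : IsGroupNorm ν) (n : ℕ) (c : G) : ν (n • c) ≤ n * ν c := by
  induction n with
  | zero => simp [norm_zero hν]
  | succ n ih =>
      rw [succ_nsmul]
      have := hν.2.1 (n • c) c
      push_cast
      linarith

lemma indec_neg (hν : IsGroupNorm ν) {g : G} (hg : IsIndecomposable ν g) :
    IsIndecomposable ν (-g) := by
  intro h hh
  have h1 : ν (-h) + ν (g - -h) = ν g := by
    have e1 : g - -h = -(-g - h) := by abel
    rw [e1, norm_neg hν, norm_neg hν, ← norm_neg hν g]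
    exact hh
  rcases hg (-h) h1 with h0 | h0
  · left; simpa using congrArg Neg.neg h0
  · right; rw [← neg_neg h, h0]

lemma part_eq_zero_or (hν : IsGroupNorm ν) {c : G} (hc : IsIndecomposable ν c)
    {ι : Type*} [Fintype ι] [DecidableEq ι] (F : ι → G)
    (hsum : c = ∑ j, F j) (hnorm : ν c = ∑ j, ν (F j)) (j : ι) :
    F j = 0 ∨ F j = c := by
  apply hc
  have h1 : c - F j = ∑ i ∈ Finset.univ.erase j, F i := by
    rw [hsum, Finset.sum_erase_eq_sub (Finset.mem_univ j)]
  have h2 : ν (c - F j) ≤ ν c - ν (F j) := by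
    rw [h1, hnorm, ← Finset.sum_erase_eq_sub (Finset.mem_univ j)]
    exact norm_sum_le hν _ _
  have h3 : ν c ≤ ν (F j) + ν (c - F j) := by
    have := hν.2.1 (F j) (c - F j)
    simpa using this
  linarith

lemma sum_split {M : Type*} [AddCommMonoid M] (n : ℕ) (F : Fin (n + 2) → M) :
    ∑ j, F j = F 0 + F 1 + ∑ i : Fin n, F i.succ.succ := by
  rw [Fin.sum_univ_succ, Fin.sum_univ_succ, Fin.succ_zero_eq_one]
  exact (add_assoc _ _ _).symm

lemma key_lemma (hν : IsGroupNorm ν) (hNBP : HasNBP ν) {g : G} (hg : IsIndecomposable ν g)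
    (h2 : g + g ≠ 0) (n : ℕ) (x : G)
    (hx : ν x + ν ((n : ℤ) • g - x) = ν ((n : ℤ) • g)) :
    x ∈ AddSubgroup.zmultiples g ∧ ν ((n : ℤ) • g) = n * ν g := by
  classical
  have hgne : g ≠ 0 := fun h => h2 (by rw [h]; simp)
  set T : Fin (n + 2) → G := Fin.cons x (Fin.cons ((n : ℤ) • g - x) (fun _ => -g)) with hT
  have hT0 : T 0 = x := rfl
  have hT1 : T 1 = (n : ℤ) • g - x := by
    rw [hT, ← Fin.succ_zero_eq_one, Fin.cons_succ, Fin.cons_zero]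
  have hTe : ∀ i : Fin n, T i.succ.succ = -g := fun i => by
    rw [hT, Fin.cons_succ, Fin.cons_succ]
  have hsum : ∑ i, T i = 0 := by
    rw [sum_split, hT0, hT1]
    simp only [hTe]
    rw [Finset.sum_const, Finset.card_univ, Fintype.card_fin, natCast_zsmul, smul_neg]
    generalize n • g = C
    abel
  obtain ⟨f, hskew, hdiag, hrow, hnrow⟩ := hNBP (n + 2) T hsum
  have hmem : ∀ (i : Fin n) (j : Fin (n + 2)), f i.succ.succ j = 0 ∨ f i.succ.succ j = -g := by
    intro i j
    exact part_eq_zero_or hν (indec_neg hν hg) _ (by rw [← hTe i]; exact hrow _)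
      (by rw [← hTe i]; exact hnrow _) j
  have hzero : ∀ i j : Fin n, i ≠ j → f i.succ.succ j.succ.succ = 0 := by
    intro i j hij
    rcases hmem i j.succ.succ with h | h
    · exact h
    · exfalso
      have h' : f j.succ.succ i.succ.succ = g := by rw [hskew, h, neg_neg]
      rcases hmem j i.succ.succ with h0 | h0
      · rw [h0] at h'; exact hgne h'.symm
      · exact h2 (eq_neg_iff_add_eq_zero.mp (h'.symm.trans h0))
  set a : Fin n → G := fun i => f i.succ.succ 0 with ha
  set b : Fin n → G := fun i => f i.succ.succ 1 with hb
  have hrow_e : ∀ i : Fin n, a i + b i = -g := by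
    intro i
    have h1 := hrow i.succ.succ
    rw [hTe i, sum_split] at h1
    have h3 : ∑ j : Fin n, f i.succ.succ j.succ.succ = 0 := by
      apply Finset.sum_eq_zero
      intro j _
      by_cases hij : i = j
      · rw [← hij]; exact hdiag _
      · exact hzero i j hij
    rw [h3, add_zero] at h1
    exact h1.symm
  have hnrow_e : ∀ i : Fin n, ν (a i) + ν (b i) = ν g := by
    intro i
    have h1 := hnrow i.succ.succ
    rw [hTe i, sum_split] at h1
    have h3 : ∑ j : Fin n, ν (f i.succ.succ j.succ.succ) = 0 := by
      apply Finset.sum_eq_zero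
      intro j _
      by_cases hij : i = j
      · rw [← hij, hdiag, norm_zero hν]
      · rw [hzero i j hij, norm_zero hν]
    rw [h3, add_zero, norm_neg hν] at h1
    exact h1.symm
  have hf0e : ∀ i : Fin n, f 0 i.succ.succ = -(a i) := fun i => hskew 0 i.succ.succ
  have hf1e : ∀ i : Fin n, f 1 i.succ.succ = -(b i) := fun i => hskew 1 i.succ.succ
  have hf10 : f 1 0 = -(f 0 1) := hskew 1 0
  have hrow0 : x = f 0 1 + ∑ i : Fin n, -(a i) := by
    have h1 := hrow 0
    rw [hT0, sum_split, hdiag, zero_add] at h1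
    simp only [hf0e] at h1
    exact h1
  have hnrow0 : ν x = ν (f 0 1) + ∑ i : Fin n, ν (a i) := by
    have h1 := hnrow 0
    rw [hT0, sum_split, hdiag, norm_zero hν, zero_add] at h1
    simp only [hf0e, norm_neg hν] at h1
    exact h1
  have hnrow1 : ν ((n : ℤ) • g - x) = ν (f 0 1) + ∑ i : Fin n, ν (b i) := by
    have h1 := hnrow 1
    rw [hT1, sum_split, hf10, norm_neg hν, hdiag, norm_zero hν, add_zero] at h1
    simp only [hf1e, norm_neg hν] at h1
    exact h1
  have hbound : ν ((n : ℤ) • g) ≤ n * ν g := by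
    rw [natCast_zsmul]; exact norm_nsmul_le hν n g
  have hsplit : ∑ i : Fin n, ν (a i) + ∑ i : Fin n, ν (b i) = n * ν g := by
    rw [← Finset.sum_add_distrib]
    simp only [hnrow_e]
    rw [Finset.sum_const, Finset.card_univ, Fintype.card_fin, nsmul_eq_mul]
  have hf01pos : 0 ≤ ν (f 0 1) := hν.1 _
  have hkey : ν (f 0 1) = 0 := by
    rw [hnrow0, hnrow1] at hx
    linarith
  have hf01 : f 0 1 = 0 := (hν.2.2.2 _).mp hkey
  constructor
  · rw [hrow0, hf01, zero_add]
    apply AddSubgroup.sum_mem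
    intro i _
    rcases hmem i 0 with h | h
    · rw [show a i = 0 from h, neg_zero]; exact zero_mem _
    · rw [show a i = -g from h, neg_neg]; exact AddSubgroup.mem_zmultiples g
  · rw [hnrow0, hnrow1, hkey] at hx
    linarith



lemma norm_zsmul (hν : IsGroupNorm ν) (hNBP : HasNBP ν) {g : G} (hg : IsIndecomposable ν g)
    (h2 : g + g ≠ 0) (k : ℤ) : ν (k • g) = (k.natAbs : ℝ) * ν g := by
  rcases k.eq_nat_or_neg with ⟨n, rfl | rfl⟩
  · rw [Int.natAbs_natCast]
    exact (key_lemma hν hNBP hg h2 n 0 (by simp [norm_zero hν])).2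
  · rw [Int.natAbs_neg, Int.natAbs_natCast, neg_zsmul, norm_neg hν]
    exact (key_lemma hν hNBP hg h2 n 0 (by simp [norm_zero hν])).2

lemma between (hν : IsGroupNorm ν) (hNBP : HasNBP ν) {g : G} (hg : IsIndecomposable ν g)
    (k : ℤ) (x : G) (hx : ν x + ν (k • g - x) = ν (k • g)) : ∃ j : ℤ, x = j • g := by
  by_cases hgg : g + g = 0
  · have hcase : k • g = 0 ∨ k • g = g := by
      rcases Int.even_or_odd k with ⟨q, hq⟩ | ⟨q, hq⟩
      · left; rw [hq, add_zsmul, ← smul_add, hgg, smul_zero]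
      · right
        rw [hq, add_zsmul, one_zsmul, mul_comm, mul_zsmul, two_zsmul, hgg, smul_zero, zero_add]
    rcases hcase with h0 | h0
    · rw [h0, zero_sub, norm_neg hν, norm_zero hν] at hx
      have hx0 : ν x = 0 := by have := hν.1 x; linarith
      exact ⟨0, by rw [(hν.2.2.2 x).mp hx0, zero_zsmul]⟩
    · rw [h0] at hx
      rcases hg x hx with h | h
      · exact ⟨0, by rw [h, zero_zsmul]⟩
      · exact ⟨1, by rw [h, one_zsmul]⟩
  · rcases k.eq_nat_or_neg with ⟨n, rfl | rfl⟩
    · obtain ⟨j, hj⟩ := AddSubgroup.mem_zmultiples_iff.mp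
        (key_lemma hν hNBP hg hgg n x hx).1
      exact ⟨j, hj.symm⟩
    · have hgg' : -g + -g ≠ 0 := by
        intro hc
        exact hgg (neg_eq_zero.mp (by rw [neg_add]; exact hc))
      have hx' : ν x + ν ((n : ℤ) • (-g) - x) = ν ((n : ℤ) • (-g)) := by
        rw [zsmul_neg, ← neg_zsmul]; exact hx
      obtain ⟨j, hj⟩ := AddSubgroup.mem_zmultiples_iff.mp
        (key_lemma hν hNBP (indec_neg hν hg) hgg' n x hx').1
      exact ⟨-j, by rw [← hj, zsmul_neg, neg_zsmul]⟩

lemma side (hν : IsGroupNorm ν) (hNBP : HasNBP ν) {g h : G}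
    (hg : IsIndecomposable ν g) (hh : IsIndecomposable ν h)
    {u : G} (hu : u ≠ 0) {j m : ℤ} (hj : u = j • g) (hm : u = m • h) :
    ∃ t : ℤ, g = t • h := by
  by_cases hgg : g + g = 0
  · have hug : u = g := by
      rcases Int.even_or_odd j with ⟨q, hq⟩ | ⟨q, hq⟩
      · exfalso; exact hu (by rw [hj, hq, add_zsmul, ← smul_add, hgg, smul_zero])
      · rw [hj, hq, add_zsmul, one_zsmul, mul_comm, mul_zsmul, two_zsmul, hgg, smul_zero,
          zero_add]
    exact ⟨m, by rw [← hug, hm]⟩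
  · have hjne : j ≠ 0 := by
      rintro rfl
      rw [zero_zsmul] at hj
      exact hu hj
    set ε : ℤ := if 0 ≤ j then 1 else -1 with hε
    have habs : (j - ε).natAbs + 1 = j.natAbs := by
      rw [hε]; split_ifs <;> omega
    have hεabs : ε.natAbs = 1 := by rw [hε]; split_ifs <;> rfl
    have hx : ν (ε • g) + ν (m • h - ε • g) = ν (m • h) := by
      rw [← hm, hj, sub_eq_add_neg, ← sub_zsmul, norm_zsmul hν hNBP hg hgg, norm_zsmul hν hNBP hg hgg,
        norm_zsmul hν hNBP hg hgg, hεabs]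
      have hc : ((j - ε).natAbs : ℝ) + 1 = (j.natAbs : ℝ) := by exact_mod_cast habs
      rw [← hc]; ring
    obtain ⟨t, ht⟩ := between hν hNBP hh m (ε • g) hx
    refine ⟨ε * t, ?_⟩
    have hinv : ε • (ε • g) = g := by rw [hε]; split_ifs <;> simp
    rw [← hinv, ht, ← mul_zsmul]

end Stmt5Aux

theorem stmt5 {G : Type*} [AddCommGroup G] (ν : G → ℝ) (hν : IsGroupNorm ν)
    (hNBP : HasNBP ν) (g h : G)
    (hg : IsIndecomposable ν g) (hh : IsIndecomposable ν h)
    (hne : AddSubgroup.zmultiples g ≠ AddSubgroup.zmultiples h) :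
    ∀ k l : ℤ, ν (k • g + l • h) = ν (k • g) + ν (l • h) := by
  open Stmt5Aux in
  intro k l
  have hsum3 : ∑ i, ![k • g, l • h, -(k • g + l • h)] i = 0 := by
    rw [Fin.sum_univ_three]
    simp only [Matrix.cons_val_zero, Matrix.cons_val_one, Matrix.head_cons,
      Matrix.cons_val_two, Matrix.tail_cons]
    abel
  obtain ⟨f, hskew, hdiag, hrow, hnrow⟩ := hNBP 3 _ hsum3
  have e0 : (![k • g, l • h, -(k • g + l • h)] : Fin 3 → G) 0 = k • g := rfl
  have e1 : (![k • g, l • h, -(k • g + l • h)] : Fin 3 → G) 1 = l • h := rfl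
  have e2 : (![k • g, l • h, -(k • g + l • h)] : Fin 3 → G) 2 = -(k • g + l • h) := rfl
  have hr0 := hrow 0
  rw [e0, Fin.sum_univ_three, hdiag 0, zero_add] at hr0
  have hn0 := hnrow 0
  rw [e0, Fin.sum_univ_three, hdiag 0, Stmt5Aux.norm_zero hν, zero_add] at hn0
  have hr1 := hrow 1
  rw [e1, Fin.sum_univ_three, hdiag 1, add_zero, hskew 1 0] at hr1
  have hn1 := hnrow 1
  rw [e1, Fin.sum_univ_three, hdiag 1, Stmt5Aux.norm_zero hν, add_zero, hskew 1 0,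
    Stmt5Aux.norm_neg hν] at hn1
  have hn2 := hnrow 2
  rw [e2, Fin.sum_univ_three, hdiag 2, Stmt5Aux.norm_zero hν, add_zero, hskew 2 0, hskew 2 1,
    Stmt5Aux.norm_neg hν, Stmt5Aux.norm_neg hν, Stmt5Aux.norm_neg hν] at hn2
  have hug : ∃ jj : ℤ, f 0 1 = jj • g := by
    apply Stmt5Aux.between hν hNBP hg k
    have hv : k • g - f 0 1 = f 0 2 := by rw [hr0]; abel
    rw [hv]; exact hn0.symm
  have huh : ∃ mm : ℤ, -(f 0 1) = mm • h := by
    apply Stmt5Aux.between hν hNBP hh l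
    have hw : l • h - -(f 0 1) = f 1 2 := by rw [hr1]; abel
    rw [hw, Stmt5Aux.norm_neg hν]; exact hn1.symm
  by_cases hu0 : f 0 1 = 0
  · rw [hu0, Stmt5Aux.norm_zero hν, zero_add] at hn0 hn1
    linarith
  · exfalso
    obtain ⟨jj, hjj⟩ := hug
    obtain ⟨mm, hmm⟩ := huh
    have hmm' : f 0 1 = (-mm) • h := by rw [neg_zsmul, ← hmm, neg_neg]
    obtain ⟨t, ht⟩ := Stmt5Aux.side hν hNBP hg hh hu0 hjj hmm'
    have hjj' : -(f 0 1) = (-jj) • g := by rw [neg_zsmul, hjj]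
    obtain ⟨s, hs⟩ := Stmt5Aux.side hν hNBP hh hg (neg_ne_zero.mpr hu0) hmm hjj'
    apply hne
    apply le_antisymm
    · exact AddSubgroup.zmultiples_le_of_mem (AddSubgroup.mem_zmultiples_iff.mpr ⟨t, ht.symm⟩)
    · exact AddSubgroup.zmultiples_le_of_mem (AddSubgroup.mem_zmultiples_iff.mpr ⟨s, hs.symm⟩)
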